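/- In the write-back-duration model of Algorithm 3, if a crash occurs after wb^s but before wb^e (so the WRITEBACK record was prepared but never persisted to NVM), then recovery behaves exactly as if the write-back never started: it replays all NVM WRITE records since the last persisted WRITEBACK record onto the disk page, and every write w followed by a sync before the crash is reflected in the recovered page (modulo later overwrites). -/

import Mathlib

/- Byte-granularity model: a page is a function from offsets to bytes; a
   record is a partial overwrite (off, len, data) within the page. -/

/-- A page of `n` bytes. -/
abbrev Page (n : ℕ) := Fin n → UInt8

/-- A partial-write record: bytes `[off, off+len)` get `data 0, …, data (len-1)`. -/
structure Rec (n : ℕ) where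
  off  : ℕ
  len  : ℕ
  data : ℕ → UInt8
  wf   : off + len ≤ n

/-- `r` covers offset `i`. -/
def covers {n : ℕ} (r : Rec n) (i : Fin n) : Prop :=
  r.off ≤ i.val ∧ i.val < r.off + r.len

/-- Apply one partial-write record to a page. -/
def applyRec {n : ℕ} (r : Rec n) (p : Page n) : Page n := fun i =>
  if r.off ≤ i.val ∧ i.val < r.off + r.len then r.data (i.val - r.off) else p i

/-- Apply a list of records in order (sequential overwrite application). -/
def applyRecs {n : ℕ} (rs : List (Rec n)) (p : Page n) : Page n :=
  rs.foldl (fun p r => applyRec r p) p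

/-- NVM log entries with version ids: WRITE(vid, record) or
    WRITEBACK(vid, exp_vid). -/
inductive Entry (n : ℕ)
  | write (vid : ℕ) (r : Rec n)
  | wbMark (vid : ℕ) (expVid : ℕ)

/-- State of the Algorithm 3 model: cache page, disk page, NVM log, the
    auto-increment version counter `page_ver_id`, and the volatile prepared
    write-back record (its exp_vid), if a write-back is in flight. -/
structure St (n : ℕ) where
  cache : Page n
  disk  : Page n
  log   : List (Entry n)
  verId : ℕ
  prep  : Option ℕ

/-- Events: sync_write; wb^s (start of write-back, records exp_vid into the
    volatile prep_rec); wb^r (the real, nondeterministically-timed disk write: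
    disk := current cache); wb^e (end of write-back: the prepared WRITEBACK
    record is persisted to the NVM log with vid := page_ver_id). -/
inductive Ev (n : ℕ)
  | syncWrite (r : Rec n)
  | wbS
  | wbR
  | wbE

def step {n : ℕ} (s : St n) : Ev n → St n
  | .syncWrite r =>
      { s with cache := applyRec r s.cache,
               log := s.log ++ [.write s.verId r],
               verId := s.verId + 1 }
  | .wbS => { s with prep := some s.verId }
  | .wbR => { s with disk := s.cache }
  | .wbE =>
      match s.prep with
      | some e => { s with log := s.log ++ [.wbMark s.verId e],
                           verId := s.verId + 1, prep := none }
      | none => s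

def run {n : ℕ} (s : St n) (tr : List (Ev n)) : St n := tr.foldl step s

/-- Algorithm 3 recovery scan: walk the log backwards (argument is the
    reversed log), collecting WRITE records while `exp ≤ vid`; a WRITEBACK
    record updates `exp` to its exp_vid.  Result is in forward replay order. -/
def collectRev {n : ℕ} : ℕ → List (Entry n) → List (Rec n)
  | _, [] => []
  | exp, .write v r :: rest => if exp ≤ v then collectRev exp rest ++ [r] else []
  | exp, .wbMark v e :: rest => if exp ≤ v then collectRev e rest else []

/-- Algorithm 3 recovery: replay the collected records onto the disk page. -/
def recover {n : ℕ} (s : St n) : Page n :=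
  applyRecs (collectRev 0 s.log.reverse) s.disk

mutual
  /-- Well-formed traces with no write-back in flight: each wb^s is followed
      (in order, possibly interleaved with sync writes) by one wb^r and then
      one wb^e; the trace may end in any phase (a crash may occur anywhere). -/
  inductive WF0 {n : ℕ} : List (Ev n) → Prop
    | nil : WF0 []
    | sw {r : Rec n} {t} : WF0 t → WF0 (.syncWrite r :: t)
    | start {t} : WFa t → WF0 (.wbS :: t)
  /-- After wb^s, before wb^r. -/
  inductive WFa {n : ℕ} : List (Ev n) → Prop
    | nil : WFa []
    | sw {r : Rec n} {t} : WFa t → WFa (.syncWrite r :: t)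
    | real {t} : WFb t → WFa (.wbR :: t)
  /-- After wb^r, before wb^e. -/
  inductive WFb {n : ℕ} : List (Ev n) → Prop
    | nil : WFb []
    | sw {r : Rec n} {t} : WFb t → WFb (.syncWrite r :: t)
    | fin {t} : WF0 t → WFb (.wbE :: t)
end

/-- Remove the pending real disk write from the event list. -/
def dropWbR {n : ℕ} : List (Ev n) → List (Ev n) :=
  List.filter fun e => match e with | .wbR => false | _ => true


section Aux
variable {n : ℕ}

lemma applyRecs_append (a b : List (Rec n)) (p : Page n) :
    applyRecs (a ++ b) p = applyRecs b (applyRecs a p) :=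
  List.foldl_append

lemma applyRecs_cons (r : Rec n) (L : List (Rec n)) (p : Page n) :
    applyRecs (r :: L) p = applyRecs L (applyRec r p) := rfl

lemma applyRec_covers {r : Rec n} {i : Fin n} (h : covers r i) (p : Page n) :
    applyRec r p i = r.data (i.val - r.off) := if_pos h

lemma applyRec_not {r : Rec n} {i : Fin n} (h : ¬ covers r i) (p : Page n) :
    applyRec r p i = p i := if_neg h

lemma applyRecs_not {L : List (Rec n)} {i : Fin n} (h : ∀ r ∈ L, ¬ covers r i)
    (p : Page n) : applyRecs L p i = p i := by
  induction L generalizing p with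
  | nil => rfl
  | cons r L ih =>
      rw [applyRecs_cons, ih (fun r' hr' => h r' (List.mem_cons_of_mem _ hr')),
        applyRec_not (h r (List.mem_cons_self))]

lemma applyRecs_covered {L : List (Rec n)} {i : Fin n}
    (h : ∃ r ∈ L, covers r i) (p q : Page n) :
    applyRecs L p i = applyRecs L q i := by
  induction L generalizing p q with
  | nil => simp at h
  | cons r L ih =>
      by_cases hex : ∃ r' ∈ L, covers r' i
      · rw [applyRecs_cons, applyRecs_cons]; exact ih hex _ _
      · have hcov : covers r i := by
          rcases h with ⟨r', hr', hc⟩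
          rcases List.mem_cons.1 hr' with h1 | h1
          · rwa [h1] at hc
          · exact absurd ⟨r', h1, hc⟩ hex
        push_neg at hex
        rw [applyRecs_cons, applyRecs_cons, applyRecs_not hex, applyRecs_not hex,
          applyRec_covers hcov, applyRec_covers hcov]

def entVid : Entry n → ℕ
  | .write v _ => v
  | .wbMark v _ => v

lemma collectRev_bound {e : ℕ} {l : List (Entry n)}
    (h : ∀ ent ∈ l, entVid ent < e) : collectRev e l = [] := by
  cases l with
  | nil => rfl
  | cons ent rest =>
      cases ent with
      | write v r =>
          have hv := h _ (List.mem_cons_self)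
          simp only [entVid] at hv
          simp [collectRev, Nat.not_le.2 hv]
      | wbMark v e' =>
          have hv := h _ (List.mem_cons_self)
          simp only [entVid] at hv
          simp [collectRev, Nat.not_le.2 hv]

def Bnd (s : St n) : Prop := ∀ ent ∈ s.log, entVid ent < s.verId
def Rec0 (s : St n) : Prop :=
  applyRecs (collectRev 0 s.log.reverse) s.disk = s.cache
def RecC (e : ℕ) (s : St n) : Prop :=
  applyRecs (collectRev e s.log.reverse) s.cache = s.cache
def RecE (e : ℕ) (s : St n) : Prop :=
  applyRecs (collectRev e s.log.reverse) s.disk = s.cache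

def Inv0 (s : St n) : Prop := Bnd s ∧ Rec0 s ∧ s.prep = none
def InvA (s : St n) : Prop :=
  Bnd s ∧ Rec0 s ∧ ∃ e, s.prep = some e ∧ e ≤ s.verId ∧ RecC e s
def InvB (s : St n) : Prop :=
  Bnd s ∧ Rec0 s ∧ ∃ e, s.prep = some e ∧ e ≤ s.verId ∧ RecE e s

lemma bnd_sw {s : St n} (r : Rec n) (h : Bnd s) : Bnd (step s (.syncWrite r)) := by
  intro ent hent
  simp only [step] at hent ⊢
  rcases List.mem_append.1 hent with h1 | h1
  · exact Nat.lt_succ_of_lt (h ent h1)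
  · simp only [List.mem_singleton] at h1
    subst h1
    simp [entVid]

lemma collect_sw {e : ℕ} (s : St n) (r : Rec n) (he : e ≤ s.verId) :
    collectRev e (step s (.syncWrite r)).log.reverse
      = collectRev e s.log.reverse ++ [r] := by
  show collectRev e (s.log ++ [Entry.write s.verId r]).reverse = _
  rw [List.reverse_append]
  simp [collectRev, he]

lemma rec0_sw {s : St n} (r : Rec n) (h : Rec0 s) : Rec0 (step s (.syncWrite r)) := by
  unfold Rec0
  rw [collect_sw s r (Nat.zero_le _), applyRecs_append]
  show applyRecs [r] (applyRecs (collectRev 0 s.log.reverse) s.disk) = applyRec r s.cache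
  rw [h]
  rfl

lemma recE_sw {s : St n} {e : ℕ} (r : Rec n) (he : e ≤ s.verId) (h : RecE e s) :
    RecE e (step s (.syncWrite r)) := by
  unfold RecE
  rw [collect_sw s r he, applyRecs_append]
  show applyRecs [r] (applyRecs (collectRev e s.log.reverse) s.disk) = applyRec r s.cache
  rw [h]
  rfl

lemma recC_sw {s : St n} {e : ℕ} (r : Rec n) (he : e ≤ s.verId) (h : RecC e s) :
    RecC e (step s (.syncWrite r)) := by
  unfold RecC
  rw [collect_sw s r he, applyRecs_append]
  show applyRecs [r] (applyRecs (collectRev e s.log.reverse) (applyRec r s.cache))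
      = applyRec r s.cache
  funext i
  show applyRec r (applyRecs (collectRev e s.log.reverse) (applyRec r s.cache)) i
      = applyRec r s.cache i
  by_cases hcov : covers r i
  · rw [applyRec_covers hcov, applyRec_covers hcov]
  · rw [applyRec_not hcov, applyRec_not hcov]
    by_cases hex : ∃ r' ∈ collectRev e s.log.reverse, covers r' i
    · exact (applyRecs_covered hex _ s.cache).trans (congrFun h i)
    · push_neg at hex
      rw [applyRecs_not hex, applyRec_not hcov]

lemma inv0_sw {s : St n} (r : Rec n) (h : Inv0 s) : Inv0 (step s (.syncWrite r)) :=
  ⟨bnd_sw r h.1, rec0_sw r h.2.1, h.2.2⟩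

lemma invA_sw {s : St n} (r : Rec n) (h : InvA s) : InvA (step s (.syncWrite r)) := by
  obtain ⟨hb, h0, e, hp, he, hc⟩ := h
  exact ⟨bnd_sw r hb, rec0_sw r h0, e, hp, Nat.le_succ_of_le he, recC_sw r he hc⟩

lemma invB_sw {s : St n} (r : Rec n) (h : InvB s) : InvB (step s (.syncWrite r)) := by
  obtain ⟨hb, h0, e, hp, he, hc⟩ := h
  exact ⟨bnd_sw r hb, rec0_sw r h0, e, hp, Nat.le_succ_of_le he, recE_sw r he hc⟩

lemma invA_of_inv0 {s : St n} (h : Inv0 s) : InvA (step s .wbS) := by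
  obtain ⟨hb, h0, hp⟩ := h
  refine ⟨hb, h0, s.verId, rfl, le_refl _, ?_⟩
  show applyRecs (collectRev s.verId s.log.reverse) s.cache = s.cache
  rw [collectRev_bound (fun ent hent => hb ent (List.mem_reverse.1 hent))]
  rfl

lemma replay_cache {L : List (Rec n)} {d c : Page n} (h : applyRecs L d = c) :
    applyRecs L c = c := by
  funext i
  by_cases hex : ∃ r ∈ L, covers r i
  · rw [applyRecs_covered hex c d, h]
  · push_neg at hex
    rw [applyRecs_not hex]

lemma invB_of_invA {s : St n} (h : InvA s) : InvB (step s .wbR) := by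
  obtain ⟨hb, h0, e, hp, he, hc⟩ := h
  refine ⟨hb, ?_, e, hp, he, hc⟩
  show applyRecs (collectRev 0 s.log.reverse) s.cache = s.cache
  exact replay_cache h0

lemma inv0_of_invB {s : St n} (h : InvB s) : Inv0 (step s .wbE) := by
  obtain ⟨c, d, l, v, pr⟩ := s
  obtain ⟨hb, h0, e, hp, he, hE⟩ := h
  simp only at hp
  subst hp
  refine ⟨?_, ?_, rfl⟩
  · intro ent hent
    simp only [step] at hent
    rcases List.mem_append.1 hent with h1 | h1
    · exact Nat.lt_succ_of_lt (hb ent h1)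
    · simp only [List.mem_singleton] at h1
      subst h1
      show v < v + 1
      exact Nat.lt_succ_self v
  · unfold Rec0
    show applyRecs (collectRev 0 (l ++ [Entry.wbMark v e]).reverse) d = c
    rw [List.reverse_append]
    show applyRecs (collectRev 0 (Entry.wbMark v e :: l.reverse)) d = c
    simp only [collectRev, Nat.zero_le, if_true]
    exact hE

lemma runInv (t : List (Ev n)) : ∀ s : St n,
    (WF0 t → Inv0 s → Rec0 (run s t)) ∧
    (WFa t → InvA s → Rec0 (run s t)) ∧
    (WFb t → InvB s → Rec0 (run s t)) := by
  induction t with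
  | nil =>
      intro s
      exact ⟨fun _ h => h.2.1, fun _ h => h.2.1, fun _ h => h.2.1⟩
  | cons e t ih =>
      intro s
      refine ⟨fun hw hi => ?_, fun hw hi => ?_, fun hw hi => ?_⟩
      · cases hw with
        | sw hw' => exact (ih _).1 hw' (inv0_sw _ hi)
        | start hw' => exact (ih _).2.1 hw' (invA_of_inv0 hi)
      · cases hw with
        | sw hw' => exact (ih _).2.1 hw' (invA_sw _ hi)
        | real hw' => exact (ih _).2.2 hw' (invB_of_invA hi)
      · cases hw with
        | sw hw' => exact (ih _).2.2 hw' (invB_sw _ hi)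
        | fin hw' => exact (ih _).1 hw' (inv0_of_invB hi)

lemma wfSplit : ∀ (t₁ t₂ : List (Ev n)),
    (WF0 (t₁ ++ Ev.wbS :: t₂) → WF0 t₁ ∧ WFa t₂) ∧
    (WFa (t₁ ++ Ev.wbS :: t₂) → WFa t₁ ∧ WFa t₂) ∧
    (WFb (t₁ ++ Ev.wbS :: t₂) → WFb t₁ ∧ WFa t₂) := by
  intro t₁
  induction t₁ with
  | nil =>
      intro t₂
      refine ⟨fun h => ?_, fun h => ?_, fun h => ?_⟩
      · cases h with
        | start h' => exact ⟨WF0.nil, h'⟩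
      · cases h
      · cases h
  | cons e t₁ ih =>
      intro t₂
      refine ⟨fun h => ?_, fun h => ?_, fun h => ?_⟩
      · cases h with
        | sw h' => obtain ⟨ha, hb⟩ := (ih t₂).1 h'; exact ⟨WF0.sw ha, hb⟩
        | start h' => obtain ⟨ha, hb⟩ := (ih t₂).2.1 h'; exact ⟨WF0.start ha, hb⟩
      · cases h with
        | sw h' => obtain ⟨ha, hb⟩ := (ih t₂).2.1 h'; exact ⟨WFa.sw ha, hb⟩
        | real h' => obtain ⟨ha, hb⟩ := (ih t₂).2.2 h'; exact ⟨WFa.real ha, hb⟩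
      · cases h with
        | sw h' => obtain ⟨ha, hb⟩ := (ih t₂).2.2 h'; exact ⟨WFb.sw ha, hb⟩
        | fin h' => obtain ⟨ha, hb⟩ := (ih t₂).1 h'; exact ⟨WFb.fin ha, hb⟩

lemma shapeAB : ∀ t : List (Ev n),
    (WFa t → Ev.wbE ∉ t → ∀ e ∈ t, e = Ev.wbR ∨ ∃ r, e = Ev.syncWrite r) ∧
    (WFb t → Ev.wbE ∉ t → ∀ e ∈ t, e = Ev.wbR ∨ ∃ r, e = Ev.syncWrite r) := by
  intro t
  induction t with
  | nil =>
      exact ⟨fun _ _ e he => absurd he List.not_mem_nil,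
        fun _ _ e he => absurd he List.not_mem_nil⟩
  | cons e t ih =>
      constructor
      · intro h hne x hx
        cases h with
        | sw h' =>
            rcases List.mem_cons.1 hx with h1 | h1
            · exact Or.inr ⟨_, h1⟩
            · exact ih.1 h' (fun hc => hne (List.mem_cons_of_mem _ hc)) x h1
        | real h' =>
            rcases List.mem_cons.1 hx with h1 | h1
            · exact Or.inl h1
            · exact ih.2 h' (fun hc => hne (List.mem_cons_of_mem _ hc)) x h1
      · intro h hne x hx
        cases h with
        | sw h' =>
            rcases List.mem_cons.1 hx with h1 | h1
            · exact Or.inr ⟨_, h1⟩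
            · exact ih.2 h' (fun hc => hne (List.mem_cons_of_mem _ hc)) x h1
        | fin h' => exact absurd (List.mem_cons_self) hne

lemma rec0_run_sw : ∀ (t : List (Ev n)) (s : St n),
    (∀ e ∈ t, ∃ r, e = Ev.syncWrite r) → Rec0 s → Rec0 (run s t) := by
  intro t
  induction t with
  | nil => intro s _ h; exact h
  | cons e t ih =>
      intro s hall h
      obtain ⟨r, hr⟩ := hall e (List.mem_cons_self)
      subst hr
      exact ih _ (fun x hx => hall x (List.mem_cons_of_mem _ hx)) (rec0_sw r h)

def writesOf : List (Ev n) → List (Rec n)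
  | [] => []
  | .syncWrite r :: t => r :: writesOf t
  | .wbS :: t => writesOf t
  | .wbR :: t => writesOf t
  | .wbE :: t => writesOf t

lemma writesOf_append : ∀ (a b : List (Ev n)),
    writesOf (a ++ b) = writesOf a ++ writesOf b := by
  intro a b
  induction a with
  | nil => rfl
  | cons e a ih => cases e <;> simp [writesOf, ih]

lemma mem_writesOf {b : List (Ev n)} {r : Rec n} (h : r ∈ writesOf b) :
    Ev.syncWrite r ∈ b := by
  induction b with
  | nil => simp [writesOf] at h
  | cons e t ih =>
      cases e with
      | syncWrite r' =>
          rcases List.mem_cons.1 h with h1 | h1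
          · subst h1; exact List.mem_cons_self
          · exact List.mem_cons_of_mem _ (ih h1)
      | wbS => exact List.mem_cons_of_mem _ (ih h)
      | wbR => exact List.mem_cons_of_mem _ (ih h)
      | wbE => exact List.mem_cons_of_mem _ (ih h)

lemma run_cache : ∀ (t : List (Ev n)) (s : St n),
    (run s t).cache = applyRecs (writesOf t) s.cache := by
  intro t
  induction t with
  | nil => intro s; rfl
  | cons e t ih =>
      intro s
      cases e with
      | syncWrite r => exact ih (step s (.syncWrite r))
      | wbS => exact ih (step s .wbS)
      | wbR => exact ih (step s .wbR)
      | wbE =>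
          show (run (step s .wbE) t).cache = applyRecs (writesOf t) s.cache
          rw [ih (step s .wbE)]
          cases hps : s.prep <;> simp [step, hps]

lemma writesOf_dropWbR : ∀ t : List (Ev n), writesOf (dropWbR t) = writesOf t := by
  intro t
  induction t with
  | nil => rfl
  | cons e t ih =>
      cases e with
      | syncWrite r =>
          show r :: writesOf (dropWbR t) = r :: writesOf t
          rw [ih]
      | wbS => exact ih
      | wbR => exact ih
      | wbE => exact ih

end Aux

/-- If a crash occurs after wb^s but before wb^e, the
    prepared WRITEBACK record was never persisted to NVM, and recovery behaves
    exactly as if the write-back never started: it equals recovery of the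
    trace with the pending write-back (the wb^s and any pending wb^r) removed,
    and every write followed by a sync before the crash is reflected in the
    recovered page, modulo later overwrites. -/
theorem crash_between_wbs_wbe (n : ℕ) (p₀ : Page n) (t₁ t₂ : List (Ev n))
    (hwf : WF0 (t₁ ++ Ev.wbS :: t₂)) (hne : Ev.wbE ∉ t₂) :
    let init : St n := ⟨p₀, p₀, [], 0, none⟩
    let s := run init (t₁ ++ Ev.wbS :: t₂)
    recover s = recover (run init (t₁ ++ dropWbR t₂)) ∧
    (∀ a r b, t₁ ++ Ev.wbS :: t₂ = a ++ Ev.syncWrite r :: b →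
      ∀ i : Fin n, covers r i →
        (∀ r', Ev.syncWrite r' ∈ b → ¬ covers r' i) →
        recover s i = r.data (i.val - r.off)) := by
  intro init s
  obtain ⟨hw1, hw2⟩ := (wfSplit t₁ t₂).1 hwf
  have hinit : Inv0 init := by
    refine ⟨?_, rfl, rfl⟩
    intro ent hent
    exact absurd hent List.not_mem_nil
  have hfull : Rec0 (run init (t₁ ++ Ev.wbS :: t₂)) :=
    (runInv (t₁ ++ Ev.wbS :: t₂) init).1 hwf hinit
  have ht1 : Rec0 (run init t₁) := (runInv t₁ init).1 hw1 hinit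
  have hswlist : ∀ e ∈ dropWbR t₂, ∃ r, e = Ev.syncWrite r := by
    intro e he
    unfold dropWbR at he
    obtain ⟨hmem, hpred⟩ := List.mem_filter.1 he
    rcases (shapeAB t₂).1 hw2 hne e hmem with h | h
    · subst h; simp at hpred
    · exact h
  have hsplitrun : run init (t₁ ++ dropWbR t₂) = run (run init t₁) (dropWbR t₂) := by
    simp [run, List.foldl_append]
  have halt : Rec0 (run init (t₁ ++ dropWbR t₂)) := by
    rw [hsplitrun]
    exact rec0_run_sw _ _ hswlist ht1
  have hcache : (run init (t₁ ++ Ev.wbS :: t₂)).cache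
      = (run init (t₁ ++ dropWbR t₂)).cache := by
    rw [run_cache, run_cache, writesOf_append, writesOf_append, writesOf_dropWbR]
    rfl
  have e1 : recover (run init (t₁ ++ Ev.wbS :: t₂))
      = (run init (t₁ ++ Ev.wbS :: t₂)).cache := hfull
  have e2 : recover (run init (t₁ ++ dropWbR t₂))
      = (run init (t₁ ++ dropWbR t₂)).cache := halt
  refine ⟨by rw [e1, e2, hcache], ?_⟩
  intro a r b heq i hcov hlater
  show recover (run init (t₁ ++ Ev.wbS :: t₂)) i = r.data (i.val - r.off)
  rw [e1, run_cache]
  have hw : writesOf (t₁ ++ Ev.wbS :: t₂) = writesOf a ++ r :: writesOf b := by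
    rw [heq, writesOf_append]
    rfl
  rw [hw, applyRecs_append, applyRecs_cons]
  have hnb : ∀ r' ∈ writesOf b, ¬ covers r' i :=
    fun r' hr' => hlater r' (mem_writesOf hr')
  rw [applyRecs_not hnb, applyRec_covers hcov]
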